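/- For k > 2, any family of hyperplane-defined regions {R(l)}_{l ∈ [2^k]} (defined by a vector set {w_t}_{t=1}^k in R^d) in which every R(l) is non-empty must contain at least ⌊(√2)^k⌋ pairwise disjoint regions. -/

import Mathlib

/-- The open region of `ℝ^d` determined by the vectors `w` and the bit pattern `l`. -/
def region {k d : ℕ} (w : Fin k → Fin d → ℝ) (l : ℕ) : Set (Fin d → ℝ) :=
  {x | ∀ t0 t1 : Fin k, l.testBit t0 = false → l.testBit t1 = true →
    0 < ∑ j, (w t1 j - w t0 j) * x j}

lemma mem_bitIndices_iff_testBit (n j : ℕ) : j ∈ n.bitIndices ↔ n.testBit j = true := by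
  induction n using Nat.binaryRec generalizing j with
  | zero => simp
  | bit b m ih =>
    cases b <;> cases j <;>
      simp [Nat.bitIndices_bit_true, Nat.bitIndices_bit_false, Nat.testBit_bit_zero,
        Nat.testBit_bit_succ, Nat.testBit_succ, Nat.mul_add_div, Nat.mul_div_cancel_left, Nat.mul_add_mod, ih]

lemma testBit_sum_two_pow {A : Finset ℕ} {j : ℕ} :
    (∑ i ∈ A, 2 ^ i).testBit j = true ↔ j ∈ A := by
  rw [← mem_bitIndices_iff_testBit, ← List.mem_toFinset, Finset.toFinset_bitIndices_twoPowSum]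

lemma two_mul_choose_le (k : ℕ) :
    2 * Nat.choose k (k / 2) ≤ Nat.choose (k + 2) ((k + 2) / 2) := by
  have h : (k + 2) / 2 = k / 2 + 1 := by omega
  rw [h, Nat.choose_succ_succ (k + 1), Nat.choose_succ_succ k]
  have h1 : Nat.choose k (k / 2) ≤ Nat.choose (k + 1) (k / 2) :=
    Nat.choose_le_choose _ (by omega)
  omega

lemma sqrt_two_pow_le_choose : ∀ k : ℕ, Real.sqrt 2 ^ (k + 2) ≤ (Nat.choose (k + 2) ((k + 2) / 2) : ℝ) := by
  have hs : Real.sqrt 2 ^ 2 = 2 := Real.sq_sqrt (by norm_num)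
  intro k
  induction k using Nat.strong_induction_on with
  | _ k ih =>
    match k with
    | 0 => rw [hs]; norm_num
    | 1 =>
      have : Real.sqrt 2 ^ 3 = 2 * Real.sqrt 2 := by
        rw [pow_succ, hs]
      rw [this]
      have h2 : Real.sqrt 2 ≤ 1.5 := by
        rw [show (1.5 : ℝ) = Real.sqrt (1.5 ^ 2) by rw [Real.sqrt_sq]; norm_num]
        exact Real.sqrt_le_sqrt (by norm_num)
      norm_num
      nlinarith
    | (n + 2) =>
      have h1 := ih n (by omega)
      have h2 := two_mul_choose_le (n + 2)
      have : Real.sqrt 2 ^ (n + 2 + 2) = 2 * Real.sqrt 2 ^ (n + 2) := by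
        rw [pow_add, hs, mul_comm]
      rw [this]
      calc 2 * Real.sqrt 2 ^ (n + 2) ≤ 2 * (Nat.choose (n + 2) ((n + 2) / 2) : ℝ) := by linarith
        _ ≤ (Nat.choose (n + 2 + 2) ((n + 2 + 2) / 2) : ℝ) := by exact_mod_cast h2

theorem exists_many_pairwise_disjoint_regions {k d : ℕ} (hk : 2 < k)
    (w : Fin k → Fin d → ℝ) (hne : ∀ l < 2 ^ k, (region w l).Nonempty) :
    ∃ S : Finset ℕ, S ⊆ Finset.range (2 ^ k) ∧
      ⌊Real.sqrt 2 ^ k⌋₊ ≤ S.card ∧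
      (S : Set ℕ).Pairwise fun l l' => region w l ∩ region w l' = ∅ := by
  classical
  set m := k / 2 with hm
  set f : Finset (Fin k) → ℕ := fun A => ∑ i ∈ A, 2 ^ (i : ℕ) with hf
  have hfsum : ∀ A : Finset (Fin k), f A = ∑ i ∈ A.image (Fin.val), 2 ^ i := by
    intro A
    rw [Finset.sum_image (by intro a _ b _ h; exact Fin.val_injective h)]
  have hbit : ∀ (A : Finset (Fin k)) (j : Fin k), (f A).testBit j = true ↔ j ∈ A := by
    intro A j
    rw [hfsum, testBit_sum_two_pow, Finset.mem_image]
    constructor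
    · rintro ⟨a, ha, hav⟩; rwa [Fin.val_injective hav] at ha
    · exact fun h => ⟨j, h, rfl⟩
  have hflt : ∀ A : Finset (Fin k), f A < 2 ^ k := by
    intro A
    calc f A ≤ ∑ i : Fin k, 2 ^ (i : ℕ) := Finset.sum_le_sum_of_subset (Finset.subset_univ A)
      _ = ∑ i ∈ Finset.range k, 2 ^ i := (Finset.sum_range fun i => 2 ^ i).symm
      _ < 2 ^ k := by
          have h2 : 0 < 2 ^ k := Nat.pow_pos (by norm_num)
          rw [Nat.geomSum_eq le_rfl]
          omega
  have hfinj : Function.Injective f := by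
    intro A B hAB
    ext j
    rw [← hbit A j, ← hbit B j, hAB]
  set S := (Finset.univ.powersetCard m).image f with hS
  refine ⟨S, ?_, ?_, ?_⟩
  · intro l hl
    simp only [hS, Finset.mem_image] at hl
    obtain ⟨A, _, rfl⟩ := hl
    exact Finset.mem_range.mpr (hflt A)
  · have hcard : S.card = Nat.choose k m := by
      rw [hS, Finset.card_image_of_injective _ hfinj, Finset.card_powersetCard,
        Finset.card_univ, Fintype.card_fin]
    rw [hcard]
    obtain ⟨n, rfl⟩ : ∃ n, k = n + 2 := ⟨k - 2, by omega⟩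
    rw [hm]
    have := Nat.floor_le_floor (sqrt_two_pow_le_choose n)
    rwa [Nat.floor_natCast] at this
  · intro l hl l' hl' hne'
    simp only [hS, Finset.coe_image, Set.mem_image, Finset.mem_coe] at hl hl'
    obtain ⟨A, hA, rfl⟩ := hl
    obtain ⟨B, hB, rfl⟩ := hl'
    have hAB : A ≠ B := fun h => hne' (by rw [h])
    have hcard : A.card = B.card := by
      rw [Finset.mem_powersetCard] at hA hB
      rw [hA.2, hB.2]
    have hABne : (A \ B).Nonempty := by
      rw [Finset.sdiff_nonempty]
      intro hsub
      exact hAB (Finset.eq_of_subset_of_card_le hsub (le_of_eq hcard.symm))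
    have hBAne : (B \ A).Nonempty := by
      rw [Finset.sdiff_nonempty]
      intro hsub
      exact hAB (Finset.eq_of_subset_of_card_le hsub (le_of_eq hcard)).symm
    obtain ⟨t, ht⟩ := hABne
    obtain ⟨s, hs⟩ := hBAne
    rw [Finset.mem_sdiff] at ht hs
    ext x
    simp only [Set.mem_inter_iff, Set.mem_empty_iff_false, iff_false]
    rintro ⟨hx1, hx2⟩
    have h1 := hx1 s t (by rw [Bool.eq_false_iff]; intro h; exact hs.2 ((hbit A s).mp h))
      ((hbit A t).mpr ht.1)
    have h2 := hx2 t s (by rw [Bool.eq_false_iff]; intro h; exact ht.2 ((hbit B t).mp h))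
      ((hbit B s).mpr hs.1)
    have : (0:ℝ) < 0 := by
      have := add_pos h1 h2
      rw [← Finset.sum_add_distrib] at this
      simp [sub_mul] at this
    exact lt_irrefl 0 this
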